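/- arXiv:1412.4800 — 2 statements merged into one kernel-verified Lean document; each statement's English description precedes it below -/
import Mathlib

section
/- Let p be a prime and G be the ascending union of the iterated amalgamated products G_n = ℚ_p *_{ℤ_p} ℚ_p *_{pℤ_p} ⋯ *_{p^{n-1}ℤ_p} ℚ_p. Then G has no non-trivial abelian subnormal subgroup. -/
universe u

/-- The subgroup `D` of `G` is the free product of its subgroups `A` and `C` with
amalgamated central subgroup `B`: the cocone of inclusions satisfies the universal
property of the pushout of the two inclusions `B → A` and `B → C`. -/
structure IsCentralAmalgamIn {G : Type u} [Group G] (A C B D : Subgroup G) : Prop where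
  A_le : A ≤ D
  C_le : C ≤ D
  B_le_A : B ≤ A
  B_le_C : B ≤ C
  central_A : ∀ b ∈ B, ∀ a ∈ A, b * a = a * b
  central_C : ∀ b ∈ B, ∀ c ∈ C, b * c = c * b
  isPushout : ∀ (K : Type u) [Group K] (f : ↥A →* K) (g : ↥C →* K),
      (∀ (b : G) (hb : b ∈ B), f ⟨b, B_le_A hb⟩ = g ⟨b, B_le_C hb⟩) →
      ∃! φ : ↥D →* K,
        φ.comp (Subgroup.inclusion A_le) = f ∧ φ.comp (Subgroup.inclusion C_le) = g

/-- The setting of the iterated central amalgamation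
`G = ⋃_n (H₀ *_{B₀} H₁ *_{B₁} ⋯ *_{B_{n-1}} H_n)`:
`B₀ ⊇ B₁ ⊇ ⋯` is a descending sequence of groups with `⋂_n B_n = 1`; for each `n`,
`B_n` is a central subgroup of both `H_n` and `H_{n+1}` with `B_n ≠ H_n` and
`B_n ≠ H_{n+1}`; `G₀ = H₀`, `G_{n+1} = G_n *_{B_n} H_{n+1}` (free product with central
amalgamation) and `G = ⋃_n G_n`.  All groups are realized as subgroups of `G`. -/
structure IteratedAmalgam (G : Type u) [Group G] where
  Gn : ℕ → Subgroup G
  Hn : ℕ → Subgroup G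
  Bn : ℕ → Subgroup G
  B_antitone : ∀ n, Bn (n + 1) ≤ Bn n
  B_iInf : ⨅ n, Bn n = ⊥
  B_le_H : ∀ n, Bn n ≤ Hn n
  B_le_H_succ : ∀ n, Bn n ≤ Hn (n + 1)
  B_central_H : ∀ n, ∀ b ∈ Bn n, ∀ h ∈ Hn n, b * h = h * b
  B_central_H_succ : ∀ n, ∀ b ∈ Bn n, ∀ h ∈ Hn (n + 1), b * h = h * b
  B_ne_H : ∀ n, Bn n ≠ Hn n
  B_ne_H_succ : ∀ n, Bn n ≠ Hn (n + 1)
  G_zero : Gn 0 = Hn 0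
  amalgam : ∀ n, IsCentralAmalgamIn (Gn n) (Hn (n + 1)) (Bn n) (Gn (n + 1))
  iSup_G : ⨆ n, Gn n = ⊤

/-- A subgroup `H` of `G` is *spread out* if `H ⊄ G_n` for every `n`. -/
def IteratedAmalgam.SpreadOut {G : Type u} [Group G] (S : IteratedAmalgam G)
    (H : Subgroup G) : Prop :=
  ∀ n : ℕ, ¬ H ≤ S.Gn n

/-- The additive subgroup `p^n ℤ_p` of `ℚ_p`. -/
def pPowZp (p : ℕ) [Fact p.Prime] (n : ℕ) : AddSubgroup ℚ_[p] where
  carrier := {x | ∃ y : ℤ_[p], (p : ℚ_[p]) ^ n * (y : ℚ_[p]) = x}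
  add_mem' := by
    rintro a b ⟨y, rfl⟩ ⟨z, rfl⟩
    exact ⟨y + z, by push_cast; ring⟩
  zero_mem' := ⟨0, by simp⟩
  neg_mem' := by
    rintro a ⟨y, rfl⟩
    exact ⟨-y, by push_cast; ring⟩

/-- The subgroup `p^n ℤ_p` of the additive group of `ℚ_p`, written multiplicatively. -/
noncomputable def pPowSubgroup (p : ℕ) [Fact p.Prime] (n : ℕ) : Subgroup (Multiplicative ℚ_[p]) :=
  AddSubgroup.toSubgroup (pPowZp p n)

/-- The iterated central amalgamation
`G = ⋃_n (ℚ_p *_{ℤ_p} ℚ_p *_{pℤ_p} ⋯ *_{p^{n-1}ℤ_p} ℚ_p)`: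
an iterated amalgam in which each `H_n` is a copy of the additive group `ℚ_p`, via an
isomorphism identifying `B_n ≤ H_n` with `p^n ℤ_p` and `B_n ≤ H_{n+1}` with
`p^n ℤ_p`. -/
structure PadicIteratedAmalgam (p : ℕ) [Fact p.Prime] (G : Type u) [Group G]
    extends IteratedAmalgam G where
  κ : ∀ n, ↥(Hn n) ≃* Multiplicative ℚ_[p]
  κ_B : ∀ (n : ℕ) (x : G) (hx : x ∈ Hn n),
    x ∈ Bn n ↔ κ n ⟨x, hx⟩ ∈ pPowSubgroup p n
  κ_B_succ : ∀ (n : ℕ) (x : G) (hx : x ∈ Hn (n + 1)),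
    x ∈ Bn n ↔ κ (n + 1) ⟨x, hx⟩ ∈ pPowSubgroup p n

/-- `S` is a subnormal subgroup of `H`: there is a finite chain
`S = c 0 ⊴ c 1 ⊴ ⋯ ⊴ c m = H` of successive normal subgroups. -/
def Subnormal {G : Type u} [Group G] (S H : Subgroup G) : Prop :=
  ∃ (m : ℕ) (c : ℕ → Subgroup G), c 0 = S ∧ c m = H ∧
    ∀ i < m, c i ≤ c (i + 1) ∧ ∀ g ∈ c (i + 1), ∀ x ∈ c i, g * x * g⁻¹ ∈ c i


universe v w

open Monoid

section Aux

/-- A nonempty reduced word in a free product has nontrivial product. -/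
theorem NeWordProdNeOne {ι : Type v} {M : ι → Type w} [∀ i, Group (M i)]
    {i j : ι} (w : CoprodI.NeWord M i j) : w.prod ≠ 1 := by
  classical
  intro h
  have h2 : CoprodI.Word.equiv.symm w.toWord = CoprodI.Word.equiv.symm CoprodI.Word.empty := by
    show w.toWord.prod = CoprodI.Word.empty.prod
    rw [CoprodI.Word.prod_empty]; exact h
  have h3 : w.toWord = CoprodI.Word.empty := CoprodI.Word.equiv.symm.injective h2
  exact w.toList_ne_nil (congrArg CoprodI.Word.toList h3)

/-- A two-element family of types indexed by `Bool`. -/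
def Mb (X Y : Type u) : Bool → Type u
  | true => X
  | false => Y

instance instGroupMb (X Y : Type u) [Group X] [Group Y] : ∀ b, Group (Mb X Y b)
  | true => inferInstanceAs (Group X)
  | false => inferInstanceAs (Group Y)

/-- In a free product `X ⋆ Y`, starting from a nontrivial element of `Y` and repeatedly
taking commutators with a fixed nontrivial element of `X` never gives `1`. -/
theorem fp_core {X Y : Type u} [Group X] [Group Y]
    (a : Mb X Y true) (y : Mb X Y false) (ha : a ≠ 1) (hy : y ≠ 1)
    (v : ℕ → CoprodI (Mb X Y))
    (hv0 : v 0 = CoprodI.of y)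
    (hvrec : ∀ k, v (k + 1) = v k * CoprodI.of a * (v k)⁻¹ * (CoprodI.of a)⁻¹) :
    ∀ k, v k ≠ 1 := by
  have core : ∀ k, ∃ cw : CoprodI.NeWord (Mb X Y) false false,
      v (k + 1) = cw.prod * (CoprodI.of a)⁻¹ := by
    intro k
    induction k with
    | zero =>
      refine ⟨((CoprodI.NeWord.singleton y hy).append (by decide)
          (CoprodI.NeWord.singleton a ha)).append (by decide)
          (CoprodI.NeWord.singleton y⁻¹ (inv_ne_one.mpr hy)), ?_⟩
      rw [hvrec 0, hv0]
      simp [mul_assoc]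
    | succ n ih =>
      obtain ⟨c, hc⟩ := ih
      refine ⟨(c.append (by decide) (CoprodI.NeWord.singleton a ha)).append (by decide)
          c.inv, ?_⟩
      rw [hvrec (n + 1), hc]
      simp only [CoprodI.NeWord.append_prod, CoprodI.NeWord.prod_singleton,
        CoprodI.NeWord.inv_prod]
      group
  intro k
  match k with
  | 0 =>
    rw [hv0]
    intro h
    exact hy (CoprodI.of_injective (M := Mb X Y) false (by rw [h, map_one]))
  | Nat.succ n =>
    obtain ⟨c, hc⟩ := core n
    rw [hc]
    have : c.prod * (CoprodI.of a)⁻¹ =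
        (c.append (by decide) (CoprodI.NeWord.singleton a⁻¹ (inv_ne_one.mpr ha))).prod := by
      simp
    rw [this]
    exact NeWordProdNeOne _

/-- In a central amalgam `D = A *_B C`, a commutator sequence starting at `y ∈ C \ B`
with `t ∈ A \ B` never reaches `1`. -/
theorem amalgam_seq_ne_one {G : Type u} [Group G] {A C B D : Subgroup G}
    (h : IsCentralAmalgamIn A C B D) {t y : G}
    (ht : t ∈ A) (htB : t ∉ B) (hy : y ∈ C) (hyB : y ∉ B)
    (e : ℕ → G) (he0 : e 0 = y)
    (herec : ∀ k, e (k + 1) = e k * t * (e k)⁻¹ * t⁻¹) :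
    ∀ k, e k ≠ 1 := by
  -- set up the quotients
  set B₁ : Subgroup ↥A := B.subgroupOf A with hB₁
  set B₂ : Subgroup ↥C := B.subgroupOf C with hB₂
  haveI : B₁.Normal := by
    constructor
    intro x hx g
    have hxB : (x : G) ∈ B := hx
    have key : (g : G) * x * (g : G)⁻¹ = (x : G) := by
      rw [← h.central_A _ hxB _ g.2]; group
    have : ((g * x * g⁻¹ : ↥A) : G) ∈ B := by
      show ((g : G) * x * (g : G)⁻¹) ∈ B
      rw [key]; exact hxB
    exact this
  haveI : B₂.Normal := by
    constructor
    intro x hx g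
    have hxB : (x : G) ∈ B := hx
    have key : (g : G) * x * (g : G)⁻¹ = (x : G) := by
      rw [← h.central_C _ hxB _ g.2]; group
    have : ((g * x * g⁻¹ : ↥C) : G) ∈ B := by
      show ((g : G) * x * (g : G)⁻¹) ∈ B
      rw [key]; exact hxB
    exact this
  set X := ↥A ⧸ B₁ with hX
  set Y := ↥C ⧸ B₂ with hY
  set K := CoprodI (Mb X Y) with hK
  set f : ↥A →* K := (CoprodI.of (M := Mb X Y) (i := true)).comp (QuotientGroup.mk' B₁) with hf
  set g : ↥C →* K := (CoprodI.of (M := Mb X Y) (i := false)).comp (QuotientGroup.mk' B₂) with hg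
  have hfg : ∀ (b : G) (hb : b ∈ B), f ⟨b, h.B_le_A hb⟩ = g ⟨b, h.B_le_C hb⟩ := by
    intro b hb
    have h1 : QuotientGroup.mk' B₁ ⟨b, h.B_le_A hb⟩ = 1 :=
      (QuotientGroup.eq_one_iff _).mpr (Subgroup.mem_subgroupOf.mpr hb)
    have h2 : QuotientGroup.mk' B₂ ⟨b, h.B_le_C hb⟩ = 1 :=
      (QuotientGroup.eq_one_iff _).mpr (Subgroup.mem_subgroupOf.mpr hb)
    show CoprodI.of (M := Mb X Y) (i := true) (QuotientGroup.mk' B₁ ⟨b, h.B_le_A hb⟩)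
        = CoprodI.of (M := Mb X Y) (i := false) (QuotientGroup.mk' B₂ ⟨b, h.B_le_C hb⟩)
    rw [h1, h2]
    exact (map_one (CoprodI.of (M := Mb X Y) (i := true))).trans (map_one (CoprodI.of (M := Mb X Y) (i := false))).symm
  obtain ⟨φ, ⟨hφA, hφC⟩, -⟩ := h.isPushout K f g hfg
  have tD : t ∈ D := h.A_le ht
  have hD : ∀ k, e k ∈ D := by
    intro k
    induction k with
    | zero => rw [he0]; exact h.C_le hy
    | succ n ih =>
      rw [herec]
      exact mul_mem (mul_mem (mul_mem ih tD) (inv_mem ih)) (inv_mem tD)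
  set a' : Mb X Y true := (QuotientGroup.mk' B₁ ⟨t, ht⟩ : X) with ha'def
  set y' : Mb X Y false := (QuotientGroup.mk' B₂ ⟨y, hy⟩ : Y) with hy'def
  have ha' : a' ≠ 1 := by
    intro hcon
    exact htB (Subgroup.mem_subgroupOf.mp ((QuotientGroup.eq_one_iff _).mp hcon))
  have hy' : y' ≠ 1 := by
    intro hcon
    exact hyB (Subgroup.mem_subgroupOf.mp ((QuotientGroup.eq_one_iff _).mp hcon))
  set v : ℕ → K := fun k => φ ⟨e k, hD k⟩ with hv
  have hφt : φ ⟨t, tD⟩ = CoprodI.of a' := by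
    have h1 : (⟨t, tD⟩ : ↥D) = Subgroup.inclusion h.A_le ⟨t, ht⟩ := Subtype.ext rfl
    rw [h1]
    exact DFunLike.congr_fun hφA ⟨t, ht⟩
  have hv0 : v 0 = CoprodI.of y' := by
    have h1 : (⟨e 0, hD 0⟩ : ↥D) = Subgroup.inclusion h.C_le ⟨y, hy⟩ := Subtype.ext he0
    show φ ⟨e 0, hD 0⟩ = CoprodI.of y'
    rw [h1]
    exact DFunLike.congr_fun hφC ⟨y, hy⟩
  have hvrec : ∀ k, v (k + 1) = v k * CoprodI.of a' * (v k)⁻¹ * (CoprodI.of a')⁻¹ := by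
    intro k
    have hsub : (⟨e (k + 1), hD (k + 1)⟩ : ↥D)
        = ⟨e k, hD k⟩ * ⟨t, tD⟩ * (⟨e k, hD k⟩ : ↥D)⁻¹ * (⟨t, tD⟩ : ↥D)⁻¹ :=
      Subtype.ext (herec k)
    show φ ⟨e (k + 1), hD (k + 1)⟩ = _
    rw [hsub, map_mul, map_mul, map_mul, map_inv, map_inv, hφt]
  intro k hk
  refine fp_core a' y' ha' hy' v hv0 hvrec k ?_
  show φ ⟨e k, hD k⟩ = 1
  have : (⟨e k, hD k⟩ : ↥D) = 1 := Subtype.ext hk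
  rw [this, map_one]

end Aux

/-- `G = ⋃_n (ℚ_p *_{ℤ_p} ℚ_p *_{pℤ_p} ⋯ *_{p^{n-1}ℤ_p} ℚ_p)` has no non-trivial
abelian subnormal subgroup. -/
theorem padicIteratedAmalgam_no_abelian_subnormal (p : ℕ) [Fact p.Prime]
    {G : Type u} [Group G] (S : PadicIteratedAmalgam p G)
    (T : Subgroup G) (hT : Subnormal T ⊤)
    (habel : ∀ a ∈ T, ∀ b ∈ T, a * b = b * a) :
    T = ⊥ := by
  -- suppose `T` is nontrivial
  by_contra hne
  rw [Subgroup.eq_bot_iff_forall] at hne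
  push_neg at hne
  obtain ⟨t, htT, ht1⟩ := hne
  obtain ⟨m, c, hc0, hcm, hstep⟩ := hT
  set I := S.toIteratedAmalgam with hI
  -- t lies in every member of the chain
  have htc : ∀ i, i ≤ m → t ∈ c i := by
    intro i
    induction i with
    | zero => intro _; rw [hc0]; exact htT
    | succ n ih =>
      intro hn
      exact (hstep n (by omega)).1 (ih (by omega))
  -- Gn is monotone
  have Gmono : ∀ {i j : ℕ}, i ≤ j → I.Gn i ≤ I.Gn j := by
    intro i j hij
    induction j, hij using Nat.le_induction with
    | base => exact le_rfl
    | succ n hn ih => exact le_trans ih (I.amalgam n).A_le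
  -- Bn is antitone
  have Bmono : ∀ {i j : ℕ}, i ≤ j → I.Bn j ≤ I.Bn i := by
    intro i j hij
    induction j, hij using Nat.le_induction with
    | base => exact le_rfl
    | succ n hn ih => exact le_trans (I.B_antitone n) ih
  -- find n with t ∈ Gn n
  have htop : t ∈ ⨆ n, I.Gn n := by rw [I.iSup_G]; trivial
  have hdir : Directed (· ≤ ·) I.Gn := fun i j =>
    ⟨max i j, Gmono (le_max_left i j), Gmono (le_max_right i j)⟩
  obtain ⟨n, htn⟩ := (Subgroup.mem_iSup_of_directed hdir).mp htop
  -- find k with t ∉ Bn k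
  have hk : ∃ k, t ∉ I.Bn k := by
    by_contra hcon
    push_neg at hcon
    have : t ∈ ⨅ k, I.Bn k := Subgroup.mem_iInf.mpr hcon
    rw [I.B_iInf] at this
    exact ht1 this
  obtain ⟨k, htk⟩ := hk
  set N := max n k with hN
  have htGN : t ∈ I.Gn N := Gmono (le_max_left n k) htn
  have htBN : t ∉ I.Bn N := fun hmem => htk (Bmono (le_max_right n k) hmem)
  -- find y ∈ Hn (N+1) \ Bn N
  have hlt : I.Bn N < I.Hn (N + 1) :=
    lt_of_le_of_ne (I.B_le_H_succ N) (I.B_ne_H_succ N)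
  obtain ⟨y, hyH, hyB⟩ := SetLike.exists_of_lt hlt
  -- the commutator sequence
  set e : ℕ → G := fun j => Nat.rec y (fun _ ej => ej * t * ej⁻¹ * t⁻¹) j with he
  have he0 : e 0 = y := rfl
  have herec : ∀ j, e (j + 1) = e j * t * (e j)⁻¹ * t⁻¹ := fun j => rfl
  -- subnormality: e m ∈ T
  have hmem : ∀ j, j ≤ m → e j ∈ c (m - j) := by
    intro j
    induction j with
    | zero =>
      intro _
      have : m - 0 = m := by omega
      rw [this, hcm]
      trivial
    | succ l ih =>
      intro hl
      have hidx : m - l = (m - (l + 1)) + 1 := by omega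
      have hlm : m - (l + 1) < m := by omega
      have h1 : e l ∈ c ((m - (l + 1)) + 1) := by rw [← hidx]; exact ih (by omega)
      have h2 : t ∈ c (m - (l + 1)) := htc _ (by omega)
      have h3 : e l * t * (e l)⁻¹ ∈ c (m - (l + 1)) :=
        (hstep _ hlm).2 (e l) h1 t h2
      rw [herec l]
      exact mul_mem h3 (inv_mem h2)
  have hemT : e m ∈ T := by
    have := hmem m le_rfl
    rwa [Nat.sub_self, hc0] at this
  -- e (m+1) = 1 since T is abelian
  have hfinal : e (m + 1) = 1 := by
    rw [herec m, ← habel t htT (e m) hemT]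
    group
  -- contradiction with the amalgam structure
  exact amalgam_seq_ne_one (I.amalgam N) htGN htBN hyH hyB e he0 herec (m + 1) hfinal
end

section
/- Let p be a prime. Every element x of the unit group ℚ_p^× that is divisible (i.e. for every n ≥ 1 there exists y ∈ ℚ_p^× with yⁿ = x) equals 1. -/
/-- Every divisible element of `ℚ_p^×` (an `x` such that for every `n ≥ 1` there is
`y` with `y ^ n = x`) equals `1`. -/
theorem padic_units_divisible_eq_one (p : ℕ) [Fact p.Prime] (x : ℚ_[p]ˣ)
    (hx : ∀ n : ℕ, 0 < n → ∃ y : ℚ_[p]ˣ, y ^ n = x) :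
    x = 1 := by
  have hp := Fact.out (p := p.Prime)
  -- valuation of x is divisible by every positive n
  have hval : ∀ n : ℕ, 0 < n → (n : ℤ) ∣ (x : ℚ_[p]).valuation := by
    intro n hn
    obtain ⟨y, hy⟩ := hx n hn
    refine ⟨(y : ℚ_[p]).valuation, ?_⟩
    have hpow : ∀ m : ℕ, ((y : ℚ_[p]) ^ m).valuation = m * (y : ℚ_[p]).valuation := by
      intro m
      induction m with
      | zero => simp
      | succ k ih =>
        rw [pow_succ, Padic.valuation_mul (pow_ne_zero _ y.ne_zero) y.ne_zero, ih]
        push_cast; ring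
    rw [← hy]
    push_cast
    rw [hpow n]
  have hv0 : (x : ℚ_[p]).valuation = 0 := by
    apply Int.eq_zero_of_abs_lt_dvd (hval ((x : ℚ_[p]).valuation.natAbs + 1) (Nat.succ_pos _))
    push_cast
    rw [Int.abs_eq_natAbs]
    push_cast
    linarith
  have hxnorm : ‖(x : ℚ_[p])‖ = 1 := by
    rw [Padic.norm_eq_zpow_neg_valuation x.ne_zero, hv0]; simp
  -- move to p-adic integers
  set xI : ℤ_[p] := ⟨(x : ℚ_[p]), hxnorm.le⟩ with hxI
  have hxI1 : xI = 1 := by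
    rw [← PadicInt.ext_of_toZModPow]
    intro k
    have hpk : 0 < p ^ k := pow_pos hp.pos k
    have hn : 0 < Nat.totient (p ^ k) := Nat.totient_pos.mpr hpk
    obtain ⟨y, hy⟩ := hx (Nat.totient (p ^ k)) hn
    have hynorm : ‖(y : ℚ_[p])‖ = 1 := by
      have h1 : ‖(y : ℚ_[p])‖ ^ Nat.totient (p ^ k) = 1 := by
        rw [← norm_pow, ← Units.val_pow_eq_pow_val, hy, hxnorm]
      rcases (pow_eq_one_iff_cases).mp h1 with h | h | h
      · omega
      · exact h
      · exfalso; have := norm_nonneg (y : ℚ_[p]); linarith [h.1]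
    set yI : ℤ_[p] := ⟨(y : ℚ_[p]), hynorm.le⟩ with hyI
    have hyu : IsUnit yI := PadicInt.isUnit_iff.mpr hynorm
    have hpowI : yI ^ Nat.totient (p ^ k) = xI := by
      apply Subtype.ext
      push_cast [hyI, hxI]
      exact (Units.val_pow_eq_pow_val y _).symm.trans (congrArg Units.val hy)
    have hmap : IsUnit (PadicInt.toZModPow k yI) := hyu.map _
    obtain ⟨u, hu⟩ := hmap
    have : PadicInt.toZModPow k xI = (u : ZMod (p ^ k)) ^ Nat.totient (p ^ k) := by
      rw [← hpowI, map_pow, hu]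
    rw [this, ← Units.val_pow_eq_pow_val, ZMod.pow_totient, Units.val_one, map_one]
  have : (x : ℚ_[p]) = 1 := by
    have := congrArg (Subtype.val) hxI1
    simpa [hxI] using this
  exact Units.ext this
end
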